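/- arXiv:math-ph/0508052 — 2 statements merged into one kernel-verified Lean document; each statement's English description precedes it below -/
import Mathlib

section
/- Lower bound for the modified Carleman weight: define, for parameters τ ≥ τ1 > 0 and ε > 0, φ'_ε(t) := h'_ε(t) − 1/2 + h''_ε(t)/(4(1 + h'_ε(t))) + (h'_ε(t) − h''_ε(t))·e^{−t}/(4(1 + e^{−t} h'_ε(t))). Then there exists a universal ε0 ∈ (0,1] such that for every τ1 > 0 there exists τ̄ > 0 with the property that for all τ ≥ τ̄, all ε ∈ (0, ε0], and all t ≥ 0, one has φ'_ε(t) > τ1 − 1/2. -/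
open MeasureTheory Filter
open scoped ENNReal Topology BigOperators

noncomputable section

/-- The derivative `h'_ε` of the Carleman weight:
`h'_ε(t) = τ1 + (τ e^{t/2} - τ1)·τ²/(τ² + ε e^t)`. -/
def hep (τ1 τ ε t : ℝ) : ℝ :=
  τ1 + (τ * Real.exp (t / 2) - τ1) * τ ^ 2 / (τ ^ 2 + ε * Real.exp t)

/-- The Carleman weight `h_ε(t) = ∫_0^t h'_ε(s) ds`. -/
def he (τ1 τ ε t : ℝ) : ℝ := ∫ s in (0 : ℝ)..t, hep τ1 τ ε s

/-- The second derivative `h''_ε = (h'_ε)'`. -/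
def hepp (τ1 τ ε : ℝ) : ℝ → ℝ := deriv (hep τ1 τ ε)

/-- The derivative `φ'_ε` of the modified Carleman weight. -/
def phip (τ1 τ ε t : ℝ) : ℝ :=
  hep τ1 τ ε t - 1 / 2 + hepp τ1 τ ε t / (4 * (1 + hep τ1 τ ε t))
    + (hep τ1 τ ε t - hepp τ1 τ ε t) * Real.exp (-t)
        / (4 * (1 + Real.exp (-t) * hep τ1 τ ε t))

lemma hepp_eq (τ1 τ ε : ℝ) (hε : 0 < ε) (t : ℝ) :
    hepp τ1 τ ε t =
      (τ * Real.exp (t / 2) * (1 / 2) * τ ^ 2 * (τ ^ 2 + ε * Real.exp t)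
        - (τ * Real.exp (t / 2) - τ1) * τ ^ 2 * (ε * Real.exp t))
        / (τ ^ 2 + ε * Real.exp t) ^ 2 := by
  have hD : (0:ℝ) < τ ^ 2 + ε * Real.exp t := by positivity
  have h1 : HasDerivAt (fun s : ℝ => Real.exp (s / 2)) (Real.exp (t / 2) * (1 / 2)) t := by
    simpa [Function.comp_def] using (Real.hasDerivAt_exp (t / 2)).comp t ((hasDerivAt_id t).div_const 2)
  have hN : HasDerivAt (fun s : ℝ => (τ * Real.exp (s / 2) - τ1) * τ ^ 2)
      (τ * (Real.exp (t / 2) * (1 / 2)) * τ ^ 2) t :=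
    (((h1.const_mul τ).sub_const τ1).mul_const (τ ^ 2))
  have hDd : HasDerivAt (fun s : ℝ => τ ^ 2 + ε * Real.exp s) (ε * Real.exp t) t :=
    ((Real.hasDerivAt_exp t).const_mul ε).const_add (τ ^ 2)
  have h : HasDerivAt (hep τ1 τ ε)
      ((τ * (Real.exp (t / 2) * (1 / 2)) * τ ^ 2 * (τ ^ 2 + ε * Real.exp t)
        - (τ * Real.exp (t / 2) - τ1) * τ ^ 2 * (ε * Real.exp t))
        / (τ ^ 2 + ε * Real.exp t) ^ 2) t := (hN.div hDd hD.ne').const_add τ1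
  rw [hepp, h.deriv]
  ring

/-- Lower bound for the modified Carleman weight: there is a universal
`ε0 ∈ (0,1]` so that for every `τ1 > 0` and all sufficiently large `τ`,
all `ε ∈ (0, ε0]` and all `t ≥ 0` one has `φ'_ε(t) > τ1 - 1/2`. -/
theorem modified_weight_lower_bound :
    ∃ ε0 : ℝ, 0 < ε0 ∧ ε0 ≤ 1 ∧
      ∀ τ1 : ℝ, 0 < τ1 →
        ∃ τbar : ℝ, 0 < τbar ∧
          ∀ τ : ℝ, τbar ≤ τ →
            ∀ ε : ℝ, 0 < ε → ε ≤ ε0 →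
              ∀ t : ℝ, 0 ≤ t → τ1 - 1 / 2 < phip τ1 τ ε t := by
  refine ⟨1, one_pos, le_refl 1, fun τ1 hτ1 => ⟨2 * τ1, by linarith, fun τ hτ ε hε _ t ht => ?_⟩⟩
  set a := Real.exp (t / 2) with ha_def
  set e := Real.exp t with he_def
  have ha : 1 ≤ a := Real.one_le_exp (by linarith)
  have he1 : 1 ≤ e := Real.one_le_exp ht
  have hτpos : 0 < τ := by linarith
  have hD : (0:ℝ) < τ ^ 2 + ε * e := by positivity
  have hτa : τ1 ≤ τ * a / 2 := by nlinarith
  have hτa' : τ1 ≤ τ * a := by nlinarith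
  set x := hep τ1 τ ε t with hx_def
  set y := hepp τ1 τ ε t with hy_def
  have hx : x = τ1 + (τ * a - τ1) * τ ^ 2 / (τ ^ 2 + ε * e) := rfl
  have hy : y = (τ * a * (1 / 2) * τ ^ 2 * (τ ^ 2 + ε * e)
      - (τ * a - τ1) * τ ^ 2 * (ε * e)) / (τ ^ 2 + ε * e) ^ 2 := hepp_eq τ1 τ ε hε t
  have hxτ1 : τ1 ≤ x := by
    rw [hx]
    have : 0 ≤ (τ * a - τ1) * τ ^ 2 / (τ ^ 2 + ε * e) := by
      apply div_nonneg _ hD.le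
      nlinarith
    linarith
  have h2 : 0 ≤ y + (x - τ1) := by
    have heq : y + (x - τ1) =
        (τ ^ 3 * a * (τ ^ 2 + ε * e) / 2 + (τ * a - τ1) * τ ^ 4) / (τ ^ 2 + ε * e) ^ 2 := by
      rw [hx, hy]
      field_simp
      ring
    rw [heq]
    apply div_nonneg _ (by positivity)
    have hp1 : (0:ℝ) ≤ τ ^ 3 * a * (τ ^ 2 + ε * e) / 2 := by positivity
    have hp2 : (0:ℝ) ≤ (τ * a - τ1) * τ ^ 4 := mul_nonneg (by linarith) (by positivity)
    linarith
  have h3 : τ1 ≤ x - y := by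
    have heq : x - τ1 - y =
        (τ ^ 2 * (τ ^ 2 + ε * e) * (τ * a / 2 - τ1) + (τ * a - τ1) * τ ^ 2 * (ε * e))
          / (τ ^ 2 + ε * e) ^ 2 := by
      rw [hx, hy]
      field_simp
      ring
    have h0 : 0 ≤ x - τ1 - y := by
      rw [heq]
      apply div_nonneg _ (by positivity)
      have h1 : 0 ≤ τ ^ 2 * (τ ^ 2 + ε * e) * (τ * a / 2 - τ1) :=
        mul_nonneg (by positivity) (by linarith)
      have hp2 : (0:ℝ) ≤ (τ * a - τ1) * τ ^ 2 * (ε * e) :=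
        mul_nonneg (mul_nonneg (by linarith) (by positivity)) (by positivity)
      linarith
    linarith
  have hE : (0:ℝ) < Real.exp (-t) := Real.exp_pos _
  have hd1 : (0:ℝ) < 4 * (1 + x) := by nlinarith
  have hd2 : (0:ℝ) < 4 * (1 + Real.exp (-t) * x) := by
    have : 0 ≤ Real.exp (-t) * x := mul_nonneg hE.le (by linarith)
    linarith
  have hB : -((x - τ1) / 4) ≤ y / (4 * (1 + x)) := by
    have step1 : -(x - τ1) / (4 * (1 + x)) ≤ y / (4 * (1 + x)) := by
      gcongr
      linarith
    have step2 : (x - τ1) / 4 ≥ (x - τ1) / (4 * (1 + x)) := by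
      gcongr
      · linarith
    rw [neg_div] at step1
    linarith
  have hC : 0 < (x - y) * Real.exp (-t) / (4 * (1 + Real.exp (-t) * x)) := by
    apply div_pos _ hd2
    exact mul_pos (by linarith) hE
  rw [phip]
  rw [← hx_def, ← hy_def]
  linarith


end
end

section
/- Elementary properties of the Carleman weight h_ε: let 0 < τ1 < τ, ε ∈ (0,1], and define h'_ε(t) := τ1 + (τ e^{t/2} − τ1)·τ²/(τ² + ε e^t) with h''_ε := (h'_ε)'. Then for all t ≥ 0: (i) h'_ε(t) > τ1; (ii) |h''_ε(t)| ≤ 3 h'_ε(t); and (iii) if ε e^t ≤ τ² then h''_ε(t) ≥ 0 (i.e. h_ε is convex up to the inflection region where ε e^t ≈ τ²). -/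
open MeasureTheory Filter
open scoped ENNReal Topology BigOperators

noncomputable section

lemma hep_hasDerivAt (τ1 τ ε t : ℝ) (hε : 0 < ε) :
    HasDerivAt (hep τ1 τ ε)
      ((τ * Real.exp (t / 2) / 2 * (τ ^ 2 + ε * Real.exp t)
        - (τ * Real.exp (t / 2) - τ1) * (ε * Real.exp t)) * τ ^ 2
        / (τ ^ 2 + ε * Real.exp t) ^ 2) t := by
  have hD : (0:ℝ) < τ ^ 2 + ε * Real.exp t := by positivity
  have hu : HasDerivAt (fun s => τ * Real.exp (s / 2) - τ1)
      (τ * Real.exp (t / 2) * (1 / 2)) t := by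
    have h : HasDerivAt (fun s : ℝ => Real.exp (s / 2)) (Real.exp (t / 2) * (1 / 2)) t := by
      have h2 : HasDerivAt (fun s : ℝ => s / 2) ((1:ℝ) / 2) t := by
        simpa using (hasDerivAt_id t).div_const 2
      exact (Real.hasDerivAt_exp (t / 2)).comp t h2
    simpa [mul_assoc] using (h.const_mul τ).sub_const τ1
  have hN : HasDerivAt (fun s => (τ * Real.exp (s / 2) - τ1) * τ ^ 2)
      (τ * Real.exp (t / 2) * (1 / 2) * τ ^ 2) t := hu.mul_const _
  have hDd : HasDerivAt (fun s => τ ^ 2 + ε * Real.exp s) (ε * Real.exp t) t :=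
    ((Real.hasDerivAt_exp t).const_mul ε).const_add _
  have h := (hN.div hDd hD.ne').const_add τ1
  have heq : hep τ1 τ ε = fun s =>
      τ1 + (τ * Real.exp (s / 2) - τ1) * τ ^ 2 / (τ ^ 2 + ε * Real.exp s) := rfl
  rw [heq]
  exact h.congr_deriv (by ring)

/-- Elementary properties of the Carleman weight `h_ε`: for `0 < τ1 < τ`,
`0 < ε ≤ 1` and `t ≥ 0` one has `h'_ε(t) > τ1`, `|h''_ε(t)| ≤ 3 h'_ε(t)`, and
`h''_ε(t) ≥ 0` whenever `ε e^t ≤ τ²`. -/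
theorem carleman_weight_properties
    (τ1 τ ε : ℝ) (hτ1 : 0 < τ1) (hττ1 : τ1 < τ) (hε : 0 < ε) (hε1 : ε ≤ 1)
    (t : ℝ) (ht : 0 ≤ t) :
    τ1 < hep τ1 τ ε t ∧
    |hepp τ1 τ ε t| ≤ 3 * hep τ1 τ ε t ∧
    (ε * Real.exp t ≤ τ ^ 2 → 0 ≤ hepp τ1 τ ε t) := by
  have hτ : 0 < τ := hτ1.trans hττ1
  set a := Real.exp (t / 2) with ha_def
  set b := Real.exp t with hb_def
  have ha1 : 1 ≤ a := Real.one_le_exp (by linarith)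
  have hab : b = a * a := by
    rw [hb_def, ha_def, ← Real.exp_add]; ring_nf
  have hb0 : 0 < b := Real.exp_pos t
  have hD : (0:ℝ) < τ ^ 2 + ε * b := by positivity
  have hepval : hep τ1 τ ε t = τ1 + (τ * a - τ1) * τ ^ 2 / (τ ^ 2 + ε * b) := rfl
  have heppval : hepp τ1 τ ε t =
      (τ * a / 2 * (τ ^ 2 + ε * b) - (τ * a - τ1) * (ε * b)) * τ ^ 2
        / (τ ^ 2 + ε * b) ^ 2 := (hep_hasDerivAt τ1 τ ε t hε).deriv
  have hτa : τ1 < τ * a := by nlinarith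
  have hsub : (0:ℝ) ≤ τ * a - τ1 := by linarith
  have hεb : (0:ℝ) ≤ ε * b := by positivity
  have hfrac : 0 < (τ * a - τ1) * τ ^ 2 / (τ ^ 2 + ε * b) :=
    div_pos (mul_pos (by linarith) (by positivity)) hD
  have h3 : 3 * (τ1 + (τ * a - τ1) * τ ^ 2 / (τ ^ 2 + ε * b)) * (τ ^ 2 + ε * b) ^ 2
      = (3 * τ1 * (τ ^ 2 + ε * b) + 3 * (τ * a - τ1) * τ ^ 2) * (τ ^ 2 + ε * b) := by
    field_simp
  refine ⟨by rw [hepval]; linarith, ?_, ?_⟩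
  · rw [abs_le, heppval, hepval]
    constructor
    · rw [neg_le, ← neg_div, div_le_iff₀ (by positivity), h3]
      nlinarith [mul_nonneg hτ1.le (mul_nonneg hD.le hD.le),
        mul_nonneg (mul_nonneg (mul_nonneg hτ.le (by linarith : (0:ℝ) ≤ a)) (sq_nonneg τ)) hD.le,
        mul_nonneg (mul_nonneg hsub (sq_nonneg τ)) hD.le,
        mul_nonneg hsub (by positivity : (0:ℝ) ≤ τ ^ 4)]
    · rw [div_le_iff₀ (by positivity), h3]
      nlinarith [mul_nonneg (mul_nonneg hτ1.le hεb) hD.le,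
        mul_nonneg (mul_nonneg (mul_nonneg hτ.le (by linarith : (0:ℝ) ≤ a)) (sq_nonneg τ)) hD.le,
        mul_nonneg (mul_nonneg hsub hεb) (sq_nonneg τ)]
  · intro hεt
    rw [heppval]
    apply div_nonneg _ (by positivity)
    have hle : ε * b ≤ τ ^ 2 := hεt
    nlinarith [mul_nonneg (mul_nonneg (mul_nonneg hτ.le (by linarith : (0:ℝ) ≤ a)) (sub_nonneg.mpr hle)) (sq_nonneg τ),
      mul_nonneg (mul_nonneg hτ1.le hεb) (sq_nonneg τ)]
end
end
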